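/- The conditional non-1-fragility probabilities given that Player 1 wins satisfy α_0(1) = 0 and, for every n ≥ 1, α_{2n}(1) = φ³ + 2φ²·α_{2n−1}(1) and α_{2n−1}(1) = (α_{2n−2}(1))². -/

import Mathlib

open Filter Topology

/-- The golden ratio `φ = (√5 − 1)/2`. -/
noncomputable def phi : ℝ := (Real.sqrt 5 - 1) / 2

/-- Backward-induction value of the win-lose game of depth `n` on the complete binary tree:
`V_0(a) = a 0`; for `n ≥ 1`, the value is the `AND` of the values of the two depth-`(n−1)`
subtrees if `n` is odd (Player 2, the minimizer, moves) and the `OR` if `n` is even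
(Player 1, the maximizer, moves).  Player 2 moves last. -/
def gameValue : (n : ℕ) → (Fin (2 ^ n) → Bool) → Bool
  | 0, a => a 0
  | n + 1, a =>
      have h : 2 ^ (n + 1) = 2 ^ n + 2 ^ n := by rw [pow_succ]; omega
      let aL : Fin (2 ^ n) → Bool := fun i => a ⟨i.1, by have := i.2; omega⟩
      let aR : Fin (2 ^ n) → Bool := fun i => a ⟨i.1 + 2 ^ n, by have := i.2; omega⟩
      if (n + 1) % 2 = 1 then gameValue n aL && gameValue n aR
      else gameValue n aL || gameValue n aR

/-- `μ_{n,p}(S)`: the probability of a set `S` of depth-`n` games when the `2^n` payoffs are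
i.i.d. Bernoulli, each `true` with probability `p`. -/
noncomputable def prob (n : ℕ) (p : ℝ) (S : Set (Fin (2 ^ n) → Bool)) : ℝ :=
  ∑ a : Fin (2 ^ n) → Bool, S.indicator (fun a => ∏ i, if a i then p else 1 - p) a

/-- A game `a` of depth `n` is `d`-fragile if there is a game `a'` at Hamming distance at most
`d` from `a` whose value differs from that of `a`. -/
def Fragile (n d : ℕ) (a : Fin (2 ^ n) → Bool) : Prop :=
  ∃ a' : Fin (2 ^ n) → Bool, hammingDist a a' ≤ d ∧ gameValue n a' ≠ gameValue n a

/-- `F_n(d,p)`: the probability that a depth-`n` random game with parameter `p` is `d`-fragile. -/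
noncomputable def fragProb (n d : ℕ) (p : ℝ) : ℝ := prob n p {a | Fragile n d a}

/-- `α_n(d)`: conditional probability that a golden game of depth `n` is not `d`-fragile,
given that Player 1 wins it. -/
noncomputable def alpha (n d : ℕ) : ℝ :=
  prob n phi {a | ¬ Fragile n d a ∧ gameValue n a = true} /
    prob n phi {a | gameValue n a = true}

/-- `β_n(d)`: conditional probability that a golden game of depth `n` is not `d`-fragile,
given that Player 2 wins it. -/
noncomputable def beta (n d : ℕ) : ℝ :=
  prob n phi {a | ¬ Fragile n d a ∧ gameValue n a = false} /
    prob n phi {a | gameValue n a = false}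


open Finset
open scoped Classical

/- ### splitting infrastructure -/

lemma two_pow_succ' (n : ℕ) : 2 ^ (n+1) = 2 ^ n + 2 ^ n := by rw [pow_succ]; omega

def gleft (n : ℕ) (a : Fin (2 ^ (n+1)) → Bool) : Fin (2 ^ n) → Bool :=
  fun i => a ⟨i.1, by have := i.2; have := two_pow_succ' n; omega⟩
def gright (n : ℕ) (a : Fin (2 ^ (n+1)) → Bool) : Fin (2 ^ n) → Bool :=
  fun i => a ⟨i.1 + 2 ^ n, by have := i.2; have := two_pow_succ' n; omega⟩
def glue (n : ℕ) (x y : Fin (2 ^ n) → Bool) : Fin (2 ^ (n+1)) → Bool :=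
  fun j => if h : (j : ℕ) < 2 ^ n then x ⟨j, h⟩
    else y ⟨(j:ℕ) - 2 ^ n, by have := j.2; have := two_pow_succ' n; omega⟩

lemma gameValue_succ (n : ℕ) (a : Fin (2 ^ (n+1)) → Bool) :
    gameValue (n+1) a = if (n + 1) % 2 = 1 then gameValue n (gleft n a) && gameValue n (gright n a)
      else gameValue n (gleft n a) || gameValue n (gright n a) := rfl

lemma glue_apply_lt (n : ℕ) (x y : Fin (2 ^ n) → Bool) (j : Fin (2^(n+1))) (h : (j:ℕ) < 2^n) :
    glue n x y j = x ⟨j, h⟩ := dif_pos h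

lemma glue_apply_ge (n : ℕ) (x y : Fin (2 ^ n) → Bool) (j : Fin (2^(n+1))) (h : ¬ (j:ℕ) < 2^n) :
    glue n x y j = y ⟨(j:ℕ) - 2 ^ n, by have := j.2; have := two_pow_succ' n; omega⟩ := dif_neg h

lemma gleft_glue (n : ℕ) (x y : Fin (2 ^ n) → Bool) : gleft n (glue n x y) = x := by
  funext i; simp [gleft, glue, i.2]

lemma gright_glue (n : ℕ) (x y : Fin (2 ^ n) → Bool) : gright n (glue n x y) = y := by
  funext i
  simp only [gright, glue]
  rw [dif_neg (by omega)]
  congr 1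
  exact Fin.ext (by simp)

lemma glue_eta (n : ℕ) (a : Fin (2 ^ (n+1)) → Bool) : glue n (gleft n a) (gright n a) = a := by
  funext j
  by_cases h : (j : ℕ) < 2 ^ n
  · simp only [glue, dif_pos h, gleft]
  · simp only [glue, dif_neg h, gright]
    congr 1
    exact Fin.ext (by simp; omega)

noncomputable def glueEquiv (n : ℕ) :
    ((Fin (2^n) → Bool) × ((Fin (2^n)) → Bool)) ≃ (Fin (2^(n+1)) → Bool) where
  toFun p := glue n p.1 p.2
  invFun a := (gleft n a, gright n a)
  left_inv p := by simp [gleft_glue, gright_glue]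
  right_inv a := glue_eta n a

lemma sum_glue {M : Type*} [AddCommMonoid M] (n : ℕ) (f : (Fin (2^(n+1)) → Bool) → M) :
    ∑ a, f a = ∑ x : Fin (2^n) → Bool, ∑ y : Fin (2^n) → Bool, f (glue n x y) := by
  rw [← Equiv.sum_comp (glueEquiv n) f, Fintype.sum_prod_type]; rfl

set_option linter.unreachableTactic false in
set_option linter.unusedTactic false in
lemma prod_index_glue {M : Type*} [CommMonoid M] (n : ℕ) (x y x' y' : Fin (2^n) → Bool)
    (g : Bool → Bool → M) :
    ∏ i, g (glue n x y i) (glue n x' y' i) = (∏ i, g (x i) (x' i)) * ∏ i, g (y i) (y' i) := by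
  have h : 2 ^ (n+1) = 2 ^ n + 2 ^ n := by rw [pow_succ]; omega
  rw [Fintype.prod_equiv (finCongr h) _
    (fun i : Fin (2^n + 2^n) => g (glue n x y (finCongr h.symm i)) (glue n x' y' (finCongr h.symm i)))
    (fun i => by congr 1 <;> · congr 1; exact Fin.ext (by simp)), Fin.prod_univ_add]
  congr 1
  · refine Fintype.prod_congr _ _ fun i => ?_
    rw [glue_apply_lt n x y _ (by simp), glue_apply_lt n x' y' _ (by simp)]
    congr 1 <;> exact Fin.ext (by simp)
  · refine Fintype.prod_congr _ _ fun i => ?_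
    rw [glue_apply_ge n x y _ (by simp only [finCongr_apply, Fin.coe_cast, Fin.coe_natAdd]; omega),
      glue_apply_ge n x' y' _ (by simp only [finCongr_apply, Fin.coe_cast, Fin.coe_natAdd]; omega)]
    congr 1 <;> (first | exact Fin.ext (by simp) | (congr 1; exact Fin.ext (by simp)))

lemma sum_index_glue {M : Type*} [AddCommMonoid M] (n : ℕ) (x y x' y' : Fin (2^n) → Bool)
    (g : Bool → Bool → M) :
    ∑ i, g (glue n x y i) (glue n x' y' i) = (∑ i, g (x i) (x' i)) + ∑ i, g (y i) (y' i) :=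
  prod_index_glue (M := Multiplicative M) n x y x' y' g

lemma hamming_glue (n : ℕ) (x y x' y' : Fin (2^n) → Bool) :
    hammingDist (glue n x y) (glue n x' y') = hammingDist x x' + hammingDist y y' := by
  classical
  simp only [hammingDist, Finset.card_filter]
  exact sum_index_glue n x y x' y' (fun b c => if b ≠ c then 1 else 0)

/- ### probability lemmas -/

noncomputable def wt (n : ℕ) (p : ℝ) (x : Fin (2^n) → Bool) : ℝ :=
  ∏ i, if x i then p else 1 - p

lemma prob_eq (n : ℕ) (p : ℝ) (S : Set (Fin (2^n) → Bool)) :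
    prob n p S = ∑ a : Fin (2^n) → Bool, if a ∈ S then wt n p a else 0 := by
  classical
  unfold prob wt
  refine Fintype.sum_congr _ _ fun a => ?_
  rw [Set.indicator_apply]

lemma wt_glue (n : ℕ) (p : ℝ) (x y : Fin (2^n) → Bool) :
    wt (n+1) p (glue n x y) = wt n p x * wt n p y :=
  prod_index_glue n x y x y (fun b _ => if b then p else 1 - p)

lemma prob_succ_prod (n : ℕ) (p : ℝ) (P Q : Set (Fin (2^n) → Bool)) :
    prob (n+1) p {a | gleft n a ∈ P ∧ gright n a ∈ Q} = prob n p P * prob n p Q := by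
  classical
  rw [prob_eq, sum_glue n, prob_eq, prob_eq, Finset.sum_mul_sum]
  refine Fintype.sum_congr _ _ fun x => Fintype.sum_congr _ _ fun y => ?_
  simp only [Set.mem_setOf_eq, gleft_glue, gright_glue, wt_glue]
  by_cases hx : x ∈ P <;> by_cases hy : y ∈ Q <;> simp [hx, hy]

lemma prob_union_disj (n : ℕ) (p : ℝ) (S T : Set (Fin (2^n) → Bool))
    (h : ∀ a, ¬(a ∈ S ∧ a ∈ T)) :
    prob n p (S ∪ T) = prob n p S + prob n p T := by
  classical
  rw [prob_eq, prob_eq, prob_eq, ← Finset.sum_add_distrib]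
  refine Fintype.sum_congr _ _ fun a => ?_
  by_cases hs : a ∈ S
  · have ht : a ∉ T := fun ht => h a ⟨hs, ht⟩
    simp [Set.mem_union, hs, ht]
  · by_cases ht : a ∈ T <;> simp [Set.mem_union, hs, ht]

lemma prob_empty (n : ℕ) (p : ℝ) : prob n p (∅ : Set (Fin (2^n) → Bool)) = 0 := by
  unfold prob
  simp

lemma prob_zero_set (p : ℝ) (S : Set (Fin (2^0) → Bool)) :
    prob 0 p S = (if (fun _ => true) ∈ S then p else 0)
      + (if (fun _ => false) ∈ S then (1-p) else 0) := by
  classical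
  haveI : Unique (Fin (2^0)) :=
    ⟨⟨⟨0, by norm_num⟩⟩, fun a => Fin.ext (by have := a.2; norm_num at this; omega)⟩
  rw [prob_eq, ← Equiv.sum_comp (Equiv.funUnique (Fin (2^0)) Bool).symm, Fintype.sum_bool]
  have hw : ∀ b : Bool, wt 0 p ((Equiv.funUnique (Fin (2^0)) Bool).symm b)
      = if b then p else 1 - p := by
    intro b
    unfold wt
    have hb : ∀ i : Fin (2^0), ((Equiv.funUnique (Fin (2^0)) Bool).symm b) i = b := fun _ => rfl
    simp only [hb]
    rw [Finset.prod_const, Finset.card_univ, Fintype.card_fin, pow_zero, pow_one]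
  have hm : ∀ b : Bool, ((Equiv.funUnique (Fin (2^0)) Bool).symm b) = (fun _ => b) := fun b => rfl
  rw [hw, hw, hm, hm]
  by_cases h1 : (fun _ => true) ∈ S <;> by_cases h2 : (fun _ => false) ∈ S <;> simp [h1, h2]

lemma prob_compl (n : ℕ) (p : ℝ) (hp : prob n p Set.univ = 1) (S : Set (Fin (2^n) → Bool)) :
    prob n p Sᶜ = 1 - prob n p S := by
  have := prob_union_disj n p S Sᶜ (fun a h => h.2 h.1)
  rw [Set.union_compl_self, hp] at this
  linarith

/- ### golden ratio facts -/

lemma sqrt5_sq : Real.sqrt 5 ^ 2 = 5 := Real.sq_sqrt (by norm_num)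

lemma phi_pos : 0 < phi := by
  have h := sqrt5_sq
  have h2 := Real.sqrt_nonneg 5
  unfold phi
  nlinarith

lemma phi_sq : phi ^ 2 = 1 - phi := by
  have h := sqrt5_sq
  unfold phi
  nlinarith

lemma prob_univ (n : ℕ) (p : ℝ) : prob n p (Set.univ : Set (Fin (2^n) → Bool)) = 1 := by
  induction n with
  | zero => rw [prob_zero_set]; simp
  | succ n ih =>
      have : (Set.univ : Set (Fin (2^(n+1)) → Bool))
          = {a | gleft n a ∈ (Set.univ : Set (Fin (2^n) → Bool))
              ∧ gright n a ∈ (Set.univ : Set (Fin (2^n) → Bool))} := by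
        ext a; simp
      rw [this, prob_succ_prod, ih, one_mul]

/- ### win probabilities -/

lemma win_succ_odd (n : ℕ) (h : (n+1) % 2 = 1) :
    {a : Fin (2^(n+1)) → Bool | gameValue (n+1) a = true}
      = {a | gleft n a ∈ {x | gameValue n x = true} ∧ gright n a ∈ {x | gameValue n x = true}} := by
  ext a
  simp [gameValue_succ, h, Bool.and_eq_true]

lemma lose_succ_even (n : ℕ) (h : (n+1) % 2 = 0) :
    {a : Fin (2^(n+1)) → Bool | gameValue (n+1) a = false}
      = {a | gleft n a ∈ {x | gameValue n x = false} ∧ gright n a ∈ {x | gameValue n x = false}} := by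
  ext a
  have : ¬ ((n+1) % 2 = 1) := by omega
  simp [gameValue_succ, this, Bool.or_eq_false_iff]

lemma win_false_compl (n : ℕ) :
    {a : Fin (2^n) → Bool | gameValue n a = false}
      = {a : Fin (2^n) → Bool | gameValue n a = true}ᶜ := by
  ext a
  simp only [Set.mem_setOf_eq, Set.mem_compl_iff, Bool.not_eq_true]

lemma W_eq (n : ℕ) : prob n phi {a | gameValue n a = true}
    = if n % 2 = 0 then phi else phi^2 := by
  induction n with
  | zero =>
      rw [prob_zero_set]
      have h1 : ((fun _ => true) : Fin (2^0) → Bool) ∈ {a | gameValue 0 a = true} := rfl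
      have h2 : ((fun _ => false) : Fin (2^0) → Bool) ∉ {a | gameValue 0 a = true} := by
        intro h
        exact Bool.false_ne_true h
      rw [if_pos h1, if_neg h2]
      simp
  | succ n ih =>
      rcases Nat.even_or_odd (n+1) with he | ho
      · have h0 : (n+1) % 2 = 0 := Nat.even_iff.mp he
        have hn1 : ¬ (n % 2 = 0) := by omega
        have hc := prob_compl (n+1) phi (prob_univ _ _) {a | gameValue (n+1) a = true}
        rw [← win_false_compl] at hc
        have hl : prob (n+1) phi {a | gameValue (n+1) a = false}
            = (1 - phi^2) * (1 - phi^2) := by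
          rw [lose_succ_even n h0, prob_succ_prod, win_false_compl,
            prob_compl n phi (prob_univ _ _), ih, if_neg hn1]
        rw [hl] at hc
        rw [if_pos h0]
        nlinarith [hc, phi_sq]
      · have h1 : (n+1) % 2 = 1 := Nat.odd_iff.mp ho
        have hn0 : n % 2 = 0 := by omega
        rw [win_succ_odd n h1, prob_succ_prod, ih, if_pos hn0, if_neg (by omega)]
        exact (pow_two phi).symm

/- ### fragility -/

lemma gameValue_glue_odd (n : ℕ) (h : (n+1) % 2 = 1) (x y : Fin (2^n) → Bool) :
    gameValue (n+1) (glue n x y) = (gameValue n x && gameValue n y) := by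
  rw [gameValue_succ, if_pos h, gleft_glue, gright_glue]

lemma gameValue_glue_even (n : ℕ) (h : (n+1) % 2 = 0) (x y : Fin (2^n) → Bool) :
    gameValue (n+1) (glue n x y) = (gameValue n x || gameValue n y) := by
  rw [gameValue_succ, if_neg (by omega), gleft_glue, gright_glue]

lemma frag_zero (a : Fin (2^0) → Bool) : Fragile 0 1 a := by
  refine ⟨fun _ => !(a 0), ?_, ?_⟩
  · have h := hammingDist_le_card_fintype (x := a) (y := fun _ => !(a 0))
    simpa using h
  · exact Bool.not_ne_self (a 0)

lemma hamming_le_one_split (n : ℕ) (x y : Fin (2^n) → Bool) (a' : Fin (2^(n+1)) → Bool)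
    (hd : hammingDist (glue n x y) a' ≤ 1) :
    (gleft n a' = x ∧ hammingDist y (gright n a') ≤ 1) ∨
      (gright n a' = y ∧ hammingDist x (gleft n a') ≤ 1) := by
  rw [← glue_eta n a', hamming_glue] at hd
  rcases Nat.le_one_iff_eq_zero_or_eq_one.mp hd with h | h
  · left
    have h1 : hammingDist x (gleft n a') = 0 := by omega
    have h2 : hammingDist y (gright n a') = 0 := by omega
    exact ⟨(hammingDist_eq_zero.mp h1).symm, by omega⟩
  · rcases Nat.eq_zero_or_pos (hammingDist x (gleft n a')) with h1 | h1
    · left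
      exact ⟨(hammingDist_eq_zero.mp h1).symm, by omega⟩
    · right
      have h2 : hammingDist y (gright n a') = 0 := by omega
      exact ⟨(hammingDist_eq_zero.mp h2).symm, by omega⟩

lemma frag_and_iff (n : ℕ) (h : (n+1) % 2 = 1) (x y : Fin (2^n) → Bool)
    (hx : gameValue n x = true) (hy : gameValue n y = true) :
    Fragile (n+1) 1 (glue n x y) ↔ (Fragile n 1 x ∨ Fragile n 1 y) := by
  have hv : gameValue (n+1) (glue n x y) = true := by
    rw [gameValue_glue_odd n h, hx, hy]; rfl
  constructor
  · rintro ⟨a', hd, hne⟩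
    rw [hv] at hne
    have hva' : gameValue (n+1) a'
        = (gameValue n (gleft n a') && gameValue n (gright n a')) := by
      rw [gameValue_succ, if_pos h]
    rcases hamming_le_one_split n x y a' hd with ⟨hl, hr⟩ | ⟨hr, hl⟩
    · right
      refine ⟨gright n a', hr, ?_⟩
      rw [hy]
      intro hcon
      exact hne (by rw [hva', hl, hx, hcon]; rfl)
    · left
      refine ⟨gleft n a', hl, ?_⟩
      rw [hx]
      intro hcon
      exact hne (by rw [hva', hr, hy, hcon]; rfl)
  · rintro (⟨x', hd, hne⟩ | ⟨y', hd, hne⟩)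
    · refine ⟨glue n x' y, ?_, ?_⟩
      · rw [hamming_glue]; simpa using hd
      · rw [hv, gameValue_glue_odd n h]
        rw [hx] at hne
        have : gameValue n x' = false := by
          cases hgx : gameValue n x' with
          | true => exact absurd hgx hne
          | false => rfl
        rw [this]
        simp
    · refine ⟨glue n x y', ?_, ?_⟩
      · rw [hamming_glue]; simpa using hd
      · rw [hv, gameValue_glue_odd n h]
        rw [hy] at hne
        have : gameValue n y' = false := by
          cases hgy : gameValue n y' with
          | true => exact absurd hgy hne
          | false => rfl
        rw [this]
        simp

lemma notfrag_or_tt (n : ℕ) (h : (n+1) % 2 = 0) (x y : Fin (2^n) → Bool)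
    (hx : gameValue n x = true) (hy : gameValue n y = true) :
    ¬ Fragile (n+1) 1 (glue n x y) := by
  rintro ⟨a', hd, hne⟩
  have hv : gameValue (n+1) (glue n x y) = true := by
    rw [gameValue_glue_even n h, hx, hy]; rfl
  rw [hv] at hne
  have hva' : gameValue (n+1) a'
      = (gameValue n (gleft n a') || gameValue n (gright n a')) := by
    rw [gameValue_succ, if_neg (by omega)]
  rcases hamming_le_one_split n x y a' hd with ⟨hl, _⟩ | ⟨hr, _⟩
  · exact hne (by rw [hva', hl, hx]; simp)
  · exact hne (by rw [hva', hr, hy]; simp)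

lemma frag_or_tf (n : ℕ) (h : (n+1) % 2 = 0) (x y : Fin (2^n) → Bool)
    (hx : gameValue n x = true) (hy : gameValue n y = false) :
    Fragile (n+1) 1 (glue n x y) ↔ Fragile n 1 x := by
  have hv : gameValue (n+1) (glue n x y) = true := by
    rw [gameValue_glue_even n h, hx, hy]; rfl
  have hva' : ∀ a' : Fin (2^(n+1)) → Bool, gameValue (n+1) a'
      = (gameValue n (gleft n a') || gameValue n (gright n a')) := by
    intro a'; rw [gameValue_succ, if_neg (by omega)]
  constructor
  · rintro ⟨a', hd, hne⟩
    rw [hv] at hne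
    rcases hamming_le_one_split n x y a' hd with ⟨hl, _⟩ | ⟨hr, hl⟩
    · exact absurd (by rw [hva', hl, hx]; simp) hne
    · refine ⟨gleft n a', hl, ?_⟩
      rw [hx]
      intro hcon
      exact hne (by rw [hva', hr, hcon]; simp)
  · rintro ⟨x', hd, hne⟩
    refine ⟨glue n x' y, ?_, ?_⟩
    · rw [hamming_glue]; simpa using hd
    · rw [hv, gameValue_glue_even n h, hy]
      rw [hx] at hne
      have : gameValue n x' = false := by
        cases hgx : gameValue n x' with
        | true => exact absurd hgx hne
        | false => rfl
      rw [this]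
      simp

lemma frag_or_ft (n : ℕ) (h : (n+1) % 2 = 0) (x y : Fin (2^n) → Bool)
    (hx : gameValue n x = false) (hy : gameValue n y = true) :
    Fragile (n+1) 1 (glue n x y) ↔ Fragile n 1 y := by
  have hv : gameValue (n+1) (glue n x y) = true := by
    rw [gameValue_glue_even n h, hx, hy]; rfl
  have hva' : ∀ a' : Fin (2^(n+1)) → Bool, gameValue (n+1) a'
      = (gameValue n (gleft n a') || gameValue n (gright n a')) := by
    intro a'; rw [gameValue_succ, if_neg (by omega)]
  constructor
  · rintro ⟨a', hd, hne⟩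
    rw [hv] at hne
    rcases hamming_le_one_split n x y a' hd with ⟨hl, hr⟩ | ⟨hr, _⟩
    · refine ⟨gright n a', hr, ?_⟩
      rw [hy]
      intro hcon
      exact hne (by rw [hva', hl, hcon]; simp)
    · exact absurd (by rw [hva', hr, hy]; simp) hne
  · rintro ⟨y', hd, hne⟩
    refine ⟨glue n x y', ?_, ?_⟩
    · rw [hamming_glue]; simpa using hd
    · rw [hv, gameValue_glue_even n h, hx]
      rw [hy] at hne
      have : gameValue n y' = false := by
        cases hgy : gameValue n y' with
        | true => exact absurd hgy hne
        | false => rfl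
      rw [this]
      simp

/- ### the sets of non-fragile wins -/

noncomputable def Aq (n : ℕ) : ℝ :=
  prob n phi {a | ¬ Fragile n 1 a ∧ gameValue n a = true}

lemma Aq_zero : Aq 0 = 0 := by
  have he : {a : Fin (2^0) → Bool | ¬ Fragile 0 1 a ∧ gameValue 0 a = true} = ∅ := by
    ext a
    simp only [Set.mem_setOf_eq, Set.mem_empty_iff_false, iff_false, not_and]
    intro hnf
    exact absurd (frag_zero a) hnf
  rw [Aq, he, prob_empty]

lemma Aq_odd (n : ℕ) (h : (n+1) % 2 = 1) : Aq (n+1) = Aq n ^ 2 := by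
  have hset : {a : Fin (2^(n+1)) → Bool | ¬ Fragile (n+1) 1 a ∧ gameValue (n+1) a = true}
      = {a | gleft n a ∈ {x | ¬ Fragile n 1 x ∧ gameValue n x = true}
          ∧ gright n a ∈ {x | ¬ Fragile n 1 x ∧ gameValue n x = true}} := by
    ext a
    simp only [Set.mem_setOf_eq]
    constructor
    · rintro ⟨hnf, hv⟩
      rw [gameValue_succ, if_pos h, Bool.and_eq_true] at hv
      obtain ⟨h1, h2⟩ := hv
      have hiff := frag_and_iff n h (gleft n a) (gright n a) h1 h2
      rw [glue_eta] at hiff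
      exact ⟨⟨fun f => hnf (hiff.mpr (Or.inl f)), h1⟩, ⟨fun f => hnf (hiff.mpr (Or.inr f)), h2⟩⟩
    · rintro ⟨⟨hf1, h1⟩, ⟨hf2, h2⟩⟩
      refine ⟨?_, by rw [gameValue_succ, if_pos h, h1, h2]; rfl⟩
      have hiff := frag_and_iff n h (gleft n a) (gright n a) h1 h2
      rw [glue_eta] at hiff
      intro f
      rcases hiff.mp f with f | f
      exacts [hf1 f, hf2 f]
  unfold Aq
  rw [hset, prob_succ_prod, sq]

lemma Aq_even (n : ℕ) (h : (n+1) % 2 = 0) :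
    Aq (n+1) = (prob n phi {x | gameValue n x = true}) ^ 2
      + 2 * Aq n * (1 - prob n phi {x | gameValue n x = true}) := by
  have hL : prob n phi {x | gameValue n x = false}
      = 1 - prob n phi {x | gameValue n x = true} := by
    rw [win_false_compl, prob_compl n phi (prob_univ _ _)]
  have hset : {a : Fin (2^(n+1)) → Bool | ¬ Fragile (n+1) 1 a ∧ gameValue (n+1) a = true}
      = ({a | gleft n a ∈ {x | gameValue n x = true}
              ∧ gright n a ∈ {x | gameValue n x = true}}
        ∪ ({a | gleft n a ∈ {x | ¬ Fragile n 1 x ∧ gameValue n x = true}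
              ∧ gright n a ∈ {x | gameValue n x = false}}
        ∪ {a | gleft n a ∈ {x | gameValue n x = false}
              ∧ gright n a ∈ {x | ¬ Fragile n 1 x ∧ gameValue n x = true}})) := by
    ext a
    simp only [Set.mem_setOf_eq, Set.mem_union]
    constructor
    · rintro ⟨hnf, hv⟩
      rw [gameValue_succ, if_neg (by omega), Bool.or_eq_true] at hv
      cases hL1 : gameValue n (gleft n a) with
      | true =>
          cases hR1 : gameValue n (gright n a) with
          | true => exact Or.inl ⟨rfl, rfl⟩
          | false =>
              refine Or.inr (Or.inl ⟨⟨?_, rfl⟩, rfl⟩)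
              have hiff := frag_or_tf n h (gleft n a) (gright n a) hL1 hR1
              rw [glue_eta] at hiff
              exact fun f => hnf (hiff.mpr f)
      | false =>
          cases hR1 : gameValue n (gright n a) with
          | true =>
              refine Or.inr (Or.inr ⟨rfl, ⟨?_, rfl⟩⟩)
              have hiff := frag_or_ft n h (gleft n a) (gright n a) hL1 hR1
              rw [glue_eta] at hiff
              exact fun f => hnf (hiff.mpr f)
          | false =>
              rcases hv with hv | hv
              · exact absurd hv (by rw [hL1]; simp)
              · exact absurd hv (by rw [hR1]; simp)
    · rintro (⟨h1, h2⟩ | ⟨⟨hf1, h1⟩, h2⟩ | ⟨h1, ⟨hf2, h2⟩⟩)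
      · refine ⟨?_, by rw [gameValue_succ, if_neg (by omega), h1, h2]; rfl⟩
        have := notfrag_or_tt n h (gleft n a) (gright n a) h1 h2
        rw [glue_eta] at this
        exact this
      · refine ⟨?_, by rw [gameValue_succ, if_neg (by omega), h1, h2]; rfl⟩
        have hiff := frag_or_tf n h (gleft n a) (gright n a) h1 h2
        rw [glue_eta] at hiff
        exact fun f => hf1 (hiff.mp f)
      · refine ⟨?_, by rw [gameValue_succ, if_neg (by omega), h1, h2]; rfl⟩
        have hiff := frag_or_ft n h (gleft n a) (gright n a) h1 h2
        rw [glue_eta] at hiff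
        exact fun f => hf2 (hiff.mp f)
  have d23 : ∀ a : Fin (2^(n+1)) → Bool,
      ¬(a ∈ {a | gleft n a ∈ {x | ¬ Fragile n 1 x ∧ gameValue n x = true}
              ∧ gright n a ∈ {x | gameValue n x = false}}
        ∧ a ∈ {a | gleft n a ∈ {x | gameValue n x = false}
              ∧ gright n a ∈ {x | ¬ Fragile n 1 x ∧ gameValue n x = true}}) := by
    rintro a ⟨⟨⟨_, h1⟩, _⟩, ⟨h1', _⟩⟩
    simp only [Set.mem_setOf_eq] at h1 h1'
    rw [h1] at h1'
    exact Bool.noConfusion h1'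
  have d123 : ∀ a : Fin (2^(n+1)) → Bool,
      ¬(a ∈ {a | gleft n a ∈ {x | gameValue n x = true}
              ∧ gright n a ∈ {x | gameValue n x = true}}
        ∧ a ∈ ({a | gleft n a ∈ {x | ¬ Fragile n 1 x ∧ gameValue n x = true}
              ∧ gright n a ∈ {x | gameValue n x = false}}
        ∪ {a | gleft n a ∈ {x | gameValue n x = false}
              ∧ gright n a ∈ {x | ¬ Fragile n 1 x ∧ gameValue n x = true}})) := by
    rintro a ⟨⟨h1, h2⟩, hu⟩
    simp only [Set.mem_setOf_eq] at h1 h2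
    rcases hu with ⟨_, h2'⟩ | ⟨h1', _⟩
    · simp only [Set.mem_setOf_eq] at h2'
      rw [h2] at h2'
      exact Bool.noConfusion h2'
    · simp only [Set.mem_setOf_eq] at h1'
      rw [h1] at h1'
      exact Bool.noConfusion h1'
  unfold Aq
  rw [hset, prob_union_disj _ _ _ _ d123, prob_union_disj _ _ _ _ d23,
    prob_succ_prod, prob_succ_prod, prob_succ_prod, hL]
  ring


/-- `α_0(1) = 0` and, for every `n ≥ 1`, `α_{2n}(1) = φ³ + 2φ²·α_{2n−1}(1)` and
`α_{2n−1}(1) = (α_{2n−2}(1))²`. -/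
theorem alpha_one_fragility_recursion :
    alpha 0 1 = 0 ∧
      ∀ n : ℕ, 1 ≤ n →
        alpha (2 * n) 1 = phi ^ 3 + 2 * phi ^ 2 * alpha (2 * n - 1) 1 ∧
        alpha (2 * n - 1) 1 = (alpha (2 * n - 2) 1) ^ 2 := by
  have hphi := phi_pos
  have hphine : phi ≠ 0 := ne_of_gt hphi
  constructor
  · have h0 := Aq_zero
    unfold Aq at h0
    unfold alpha
    rw [h0, zero_div]
  · intro n hn
    obtain ⟨k, rfl⟩ : ∃ k, n = k + 1 := ⟨n - 1, by omega⟩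
    have hWodd : prob (2*k+1) phi {a | gameValue (2*k+1) a = true} = phi^2 := by
      rw [W_eq, if_neg (by omega)]
    have hWeven : prob ((2*k+1)+1) phi {a | gameValue ((2*k+1)+1) a = true} = phi := by
      rw [W_eq, if_pos (by omega)]
    have hWeven' : prob (2*k) phi {a | gameValue (2*k) a = true} = phi := by
      rw [W_eq, if_pos (by omega)]
    have hAe := Aq_even (2*k+1) (by omega)
    have hAo := Aq_odd (2*k) (by omega)
    unfold Aq at hAe hAo
    constructor
    · rw [show 2*(k+1)-1 = 2*k+1 from by omega, show 2*(k+1) = (2*k+1)+1 from by omega]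
      unfold alpha
      rw [hAe, hWodd, hWeven]
      have h15 : (1:ℝ) - phi^2 = phi := by linarith [phi_sq]
      rw [h15]
      field_simp
    · rw [show 2*(k+1)-1 = 2*k+1 from by omega, show 2*(k+1)-2 = 2*k from by omega]
      unfold alpha
      rw [hAo, hWodd, hWeven', div_pow]
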